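/- Let G be a residually nilpotent group, i.e. the intersection of the terms of the lower central series of G (C₁ = G, C_{i+1} = [G, C_i]) is the trivial subgroup. Let K ≥ 1 be a real number and let A be a finite K-approximate subgroup of G with A ≠ {1}. Then there exists an element γ ∈ A² with γ ≠ 1 such that |A² ∩ C_G(γ)| ≥ |A| / K⁶, where C_G(γ) = {g ∈ G : gγ = γg} is the centralizer of γ in G. -/

import Mathlib

open scoped Pointwise

/-- A finite subset `A` of a group `G` is a `K`-approximate subgroup if it is
symmetric, contains the identity, and there is a symmetric subset `X ⊆ A·A·A`
with `|X| ≤ K` such that `A·A ⊆ X·A`. -/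
def IsApproxSubgroup {G : Type*} [Group G] (K : ℝ) (A : Set G) : Prop :=
  A.Finite ∧ (1 : G) ∈ A ∧ (∀ a ∈ A, a⁻¹ ∈ A) ∧
    ∃ X : Set G, X.Finite ∧ X ⊆ A * A * A ∧ (∀ x ∈ X, x⁻¹ ∈ X) ∧
      (X.ncard : ℝ) ≤ K ∧ A * A ⊆ X * A

/-- Proposition (large centralizer): in a residually nilpotent group, any
`K`-approximate subgroup `A ≠ {1}` contains a nontrivial element `γ ∈ A²`
with `|A² ∩ C_G(γ)| ≥ |A|/K⁶`. -/
theorem stmt_7 {G : Type*} [Group G]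
    (hres : (⨅ n : ℕ, (⊤ : Subgroup G).lowerCentralSeries n) = ⊥)
    (K : ℝ) (hK : 1 ≤ K) (A : Set G) (hA : IsApproxSubgroup K A)
    (hnontriv : A ≠ {1}) :
    ∃ γ ∈ A * A, γ ≠ 1 ∧
      (A.ncard : ℝ) / K ^ 6 ≤ ((A * A ∩ {g : G | g * γ = γ * g}).ncard : ℝ) := by
  classical
  obtain ⟨hfin, h1A, hsymA, X, hXfin, hXsub, hXsym, hXcard, hcov⟩ := hA
  -- a nontrivial element of A
  obtain ⟨a₀, ha₀A, ha₀⟩ : ∃ a ∈ A, a ≠ 1 := by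
    by_contra h
    push_neg at h
    exact hnontriv (Set.eq_singleton_iff_unique_mem.mpr ⟨h1A, h⟩)
  have hBfin : (A * A).Finite := hfin.mul hfin
  have hAB : A ⊆ A * A := fun a ha => by
    simpa using Set.mul_mem_mul ha h1A
  -- every nontrivial element escapes some term of the lower central series
  have hesc : ∀ g ∈ A * A, g ≠ 1 → ∃ n, g ∉ (⊤ : Subgroup G).lowerCentralSeries n := by
    intro g _ hg1
    by_contra h
    push_neg at h
    have hmem : g ∈ (⨅ n : ℕ, (⊤ : Subgroup G).lowerCentralSeries n) := Subgroup.mem_iInf.mpr h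
    rw [hres, Subgroup.mem_bot] at hmem
    exact hg1 hmem
  set P : ℕ → Prop := fun i => ∃ g ∈ A * A, g ≠ 1 ∧ g ∈ (⊤ : Subgroup G).lowerCentralSeries i with hP
  have hchoiceN : ∀ g : G, ∃ n, g ∈ A * A → g ≠ 1 → g ∉ (⊤ : Subgroup G).lowerCentralSeries n := by
    intro g
    by_cases hg : g ∈ A * A ∧ g ≠ 1
    · obtain ⟨n, hn⟩ := hesc g hg.1 hg.2
      exact ⟨n, fun _ _ => hn⟩
    · exact ⟨0, fun h1 h2 => absurd ⟨h1, h2⟩ hg⟩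
  choose nf hnf using hchoiceN
  set N := hBfin.toFinset.sup nf with hN
  have hbd : ∀ i, P i → i ≤ N := by
    rintro i ⟨g, hg, hg1, hgi⟩
    by_contra h
    push_neg at h
    have h1 : nf g ≤ N := Finset.le_sup (hBfin.mem_toFinset.mpr hg)
    exact (hnf g hg hg1) (Subgroup.lowerCentralSeries_antitone _ (le_of_lt (lt_of_le_of_lt h1 h)) hgi)
  have hP0 : P 0 := ⟨a₀, hAB ha₀A, ha₀, by rw [Subgroup.lowerCentralSeries_zero]; exact Subgroup.mem_top _⟩
  set i := Nat.findGreatest P N with hi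
  have hPi : P i := Nat.findGreatest_spec (Nat.zero_le N) hP0
  have key : ∀ g ∈ A * A, g ∈ (⊤ : Subgroup G).lowerCentralSeries (i + 1) → g = 1 := by
    intro g hg hgmem
    by_contra h1
    have hPi1 : P (i + 1) := ⟨g, hg, h1, hgmem⟩
    exact Nat.findGreatest_is_greatest (Nat.lt_succ_self _) (hbd _ hPi1) hPi1
  obtain ⟨γ, hγB, hγ1, hγi⟩ := hPi
  refine ⟨γ, hγB, hγ1, ?_⟩
  -- conjugates of γ lie in γ · C_{i+1}
  have hconj : ∀ a : G, γ⁻¹ * (a * γ * a⁻¹) ∈ (⊤ : Subgroup G).lowerCentralSeries (i + 1) := by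
    intro a
    rw [Subgroup.mem_lowerCentralSeries_succ_iff]
    apply Subgroup.subset_closure
    exact ⟨γ⁻¹, Subgroup.inv_mem _ hγi, a, Subgroup.mem_top a, by group⟩
  -- decompose each conjugate as x * b with x ∈ X³, b ∈ A
  have hTdecomp : ∀ a ∈ A, ∃ x ∈ X * X * X, ∃ b ∈ A, a * γ * a⁻¹ = x * b := by
    intro a ha
    obtain ⟨b, hb, c, hc, hbc⟩ := hγB
    obtain ⟨x₁, hx₁, d, hd, h₁⟩ := hcov (Set.mul_mem_mul ha hb)
    obtain ⟨x₂, hx₂, e, he, h₂⟩ := hcov (Set.mul_mem_mul hd hc)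
    obtain ⟨x₃, hx₃, f, hf, h₃⟩ := hcov (Set.mul_mem_mul he (hsymA a ha))
    simp only at hbc h₁ h₂ h₃
    refine ⟨x₁ * x₂ * x₃, Set.mul_mem_mul (Set.mul_mem_mul hx₁ hx₂) hx₃, f, hf, ?_⟩
    calc a * γ * a⁻¹ = (a * b) * c * a⁻¹ := by rw [← hbc]; group
      _ = x₁ * d * c * a⁻¹ := by rw [h₁]
      _ = x₁ * (d * c) * a⁻¹ := by group
      _ = x₁ * (x₂ * e) * a⁻¹ := by rw [h₂]
      _ = x₁ * x₂ * (e * a⁻¹) := by group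
      _ = x₁ * x₂ * (x₃ * f) := by rw [h₃]
      _ = x₁ * x₂ * x₃ * f := by group
  set FA := hfin.toFinset with hFA
  set FX := hXfin.toFinset with hFX
  set conj : G → G := fun a => a * γ * a⁻¹ with hconjdef
  set Timg := FA.image conj with hTimg
  have hXXXfin : (X * X * X).Finite := (hXfin.mul hXfin).mul hXfin
  -- each conjugate, translated by γ⁻¹, lies in C_{i+1}
  have hTc : ∀ t ∈ Timg, γ⁻¹ * t ∈ (⊤ : Subgroup G).lowerCentralSeries (i + 1) := by
    intro t ht
    obtain ⟨a, haF, rfl⟩ := Finset.mem_image.mp ht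
    exact hconj a
  -- choose a decomposition for each conjugate
  have hchx : ∀ t : G, ∃ p : G × G, t ∈ Timg → p.1 ∈ X * X * X ∧ p.2 ∈ A ∧ t = p.1 * p.2 := by
    intro t
    by_cases ht : t ∈ Timg
    · obtain ⟨a, haF, rfl⟩ := Finset.mem_image.mp ht
      have ha : a ∈ A := hfin.mem_toFinset.mp haF
      obtain ⟨x, hx, b, hb, h⟩ := hTdecomp a ha
      exact ⟨(x, b), fun _ => ⟨hx, hb, h⟩⟩
    · exact ⟨(1, 1), fun h => absurd h ht⟩
  choose q hq using hchx
  -- at most |X³| distinct conjugates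
  have hcard1 : Timg.card ≤ hXXXfin.toFinset.card := by
    apply Finset.card_le_card_of_injOn (fun t => (q t).1)
    · intro t ht
      exact hXXXfin.mem_toFinset.mpr (hq t ht).1
    · intro t ht t' ht' heq
      simp only at heq
      simp only [Finset.mem_coe] at ht ht'
      obtain ⟨hx1, hb1, he1⟩ := hq t ht
      obtain ⟨hx2, hb2, he2⟩ := hq t' ht'
      have hm : t⁻¹ * t' ∈ (⊤ : Subgroup G).lowerCentralSeries (i + 1) := by
        have hgp : t⁻¹ * t' = (γ⁻¹ * t)⁻¹ * (γ⁻¹ * t') := by group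
        rw [hgp]
        exact Subgroup.mul_mem _ (Subgroup.inv_mem _ (hTc t ht)) (hTc t' ht')
      have e : t⁻¹ * t' = (q t).2⁻¹ * (q t').2 := by
        calc t⁻¹ * t' = ((q t).1 * (q t).2)⁻¹ * ((q t').1 * (q t').2) := by
              rw [← he1, ← he2]
          _ = (q t).2⁻¹ * ((q t).1⁻¹ * (q t').1) * (q t').2 := by group
          _ = (q t).2⁻¹ * (q t').2 := by rw [heq]; group
      have hAA : t⁻¹ * t' ∈ A * A := by
        rw [e]; exact Set.mul_mem_mul (hsymA _ hb1) hb2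
      exact inv_mul_eq_one.mp (key _ hAA hm)
  -- the centralizer intersection
  set C : Set G := {g : G | g * γ = γ * g} with hC
  have hmfin : (A * A ∩ C).Finite := hBfin.inter_of_left _
  -- fibers of the conjugation map have size at most |A² ∩ C(γ)|
  have hcard2 : FA.card ≤ hmfin.toFinset.card * Timg.card := by
    apply Finset.card_le_mul_card_image
    intro t ht
    obtain ⟨a₁, ha₁F, hfa₁⟩ := Finset.mem_image.mp ht
    have ha₁ : a₁ ∈ A := hfin.mem_toFinset.mp ha₁F
    apply Finset.card_le_card_of_injOn (fun b => a₁⁻¹ * b)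
    · intro b hb
      simp only [Finset.coe_filter, Set.mem_setOf_eq] at hb
      obtain ⟨hbF, hfb⟩ := hb
      have hbA : b ∈ A := hfin.mem_toFinset.mp hbF
      apply hmfin.mem_toFinset.mpr
      constructor
      · exact Set.mul_mem_mul (hsymA _ ha₁) hbA
      · have hh : a₁ * γ * a₁⁻¹ = b * γ * b⁻¹ := hfa₁.trans hfb.symm
        show (a₁⁻¹ * b) * γ = γ * (a₁⁻¹ * b)
        calc (a₁⁻¹ * b) * γ = a₁⁻¹ * (b * γ * b⁻¹) * b := by group
          _ = a₁⁻¹ * (a₁ * γ * a₁⁻¹) * b := by rw [hh]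
          _ = γ * (a₁⁻¹ * b) := by group
    · intro b _ b' _ hbb
      exact mul_left_cancel hbb
  -- |X³| ≤ |X|³
  have hXXXcard : hXXXfin.toFinset.card ≤ FX.card * FX.card * FX.card := by
    have heq : hXXXfin.toFinset = FX * FX * FX := by
      rw [hFX, ← Set.Finite.toFinset_mul, ← Set.Finite.toFinset_mul]
    rw [heq]
    calc (FX * FX * FX).card ≤ (FX * FX).card * FX.card := Finset.card_mul_le
      _ ≤ FX.card * FX.card * FX.card :=
        Nat.mul_le_mul_right _ Finset.card_mul_le
  -- assemble the counting in ℕ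
  have hnat : FA.card ≤ hmfin.toFinset.card * (FX.card * FX.card * FX.card) :=
    le_trans hcard2 (Nat.mul_le_mul_left _ (le_trans hcard1 hXXXcard))
  -- convert to the real inequality
  have hAcard : A.ncard = FA.card := Set.ncard_eq_toFinset_card A hfin
  have hmcard : (A * A ∩ C).ncard = hmfin.toFinset.card :=
    Set.ncard_eq_toFinset_card _ hmfin
  have hXncard : X.ncard = FX.card := Set.ncard_eq_toFinset_card X hXfin
  have hFXK : (FX.card : ℝ) ≤ K := by rw [← hXncard]; exact hXcard
  have hFXnn : (0 : ℝ) ≤ (FX.card : ℝ) := Nat.cast_nonneg _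
  have hK6 : (0 : ℝ) < K ^ 6 := by positivity
  rw [div_le_iff₀ hK6]
  have hreal : (A.ncard : ℝ) ≤
      ((A * A ∩ C).ncard : ℝ) * ((FX.card : ℝ) * (FX.card : ℝ) * (FX.card : ℝ)) := by
    rw [hAcard, hmcard]
    exact_mod_cast hnat
  have hmnn : (0 : ℝ) ≤ ((A * A ∩ C).ncard : ℝ) := Nat.cast_nonneg _
  calc (A.ncard : ℝ) ≤ ((A * A ∩ C).ncard : ℝ) * ((FX.card : ℝ) * (FX.card : ℝ) * (FX.card : ℝ)) :=
        hreal
    _ ≤ ((A * A ∩ C).ncard : ℝ) * (K * K * K) := by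
        apply mul_le_mul_of_nonneg_left _ hmnn
        have h0K : (0 : ℝ) ≤ K := le_trans zero_le_one hK
        exact mul_le_mul (mul_le_mul hFXK hFXK hFXnn h0K) hFXK hFXnn (by positivity)
    _ ≤ ((A * A ∩ C).ncard : ℝ) * K ^ 6 := by
        apply mul_le_mul_of_nonneg_left _ hmnn
        calc K * K * K = K ^ 3 := by ring
          _ ≤ K ^ 6 := by
            apply pow_le_pow_right₀ hK
            norm_num
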